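/- Let C > 0, T > 0, and let h : [0,T] → ℝ be a differentiable function such that 0 < h(t) < 1 for all t ∈ [0,T] and |h'(t)| ≤ −C·h(t)·ln(h(t)) for all t ∈ [0,T]. Then for all t ∈ [0,T] one has h(0)^{exp(Ct)} ≤ h(t) ≤ h(0)^{exp(−Ct)}. -/

import Mathlib

/-- Double-sided logarithmic Gronwall inequality (core of Proposition A.4):
if `|h'| ≤ -C h ln h` with `0 < h < 1`, then `h(0)^{e^{Ct}} ≤ h(t) ≤ h(0)^{e^{-Ct}}`. -/
theorem log_gronwall
    (C T : ℝ) (hC : 0 < C) (hT : 0 < T)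
    (h h' : ℝ → ℝ)
    (hderiv : ∀ t ∈ Set.Icc (0:ℝ) T, HasDerivWithinAt h (h' t) (Set.Icc 0 T) t)
    (hpos : ∀ t ∈ Set.Icc (0:ℝ) T, 0 < h t)
    (hlt1 : ∀ t ∈ Set.Icc (0:ℝ) T, h t < 1)
    (hbound : ∀ t ∈ Set.Icc (0:ℝ) T, |h' t| ≤ -C * h t * Real.log (h t)) :
    ∀ t ∈ Set.Icc (0:ℝ) T,
      h 0 ^ Real.exp (C * t) ≤ h t ∧ h t ≤ h 0 ^ Real.exp (-C * t) := by
  -- logs are negative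
  have hlogneg : ∀ t ∈ Set.Icc (0:ℝ) T, Real.log (h t) < 0 := fun t ht =>
    Real.log_neg (hpos t ht) (hlt1 t ht)
  set u : ℝ → ℝ := fun t => Real.log (-Real.log (h t)) with hu
  set u' : ℝ → ℝ := fun t => -(h' t / h t) / (-Real.log (h t)) with hu'
  have huderiv : ∀ t ∈ Set.Icc (0:ℝ) T, HasDerivWithinAt u (u' t) (Set.Icc 0 T) t := by
    intro t ht
    have h1 : HasDerivWithinAt (fun s => Real.log (h s)) (h' t / h t) (Set.Icc 0 T) t :=
      (hderiv t ht).log (hpos t ht).ne'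
    exact (h1.neg).log (by have := hlogneg t ht; show -Real.log (h t) ≠ 0; linarith)
  have hubound : ∀ t ∈ Set.Icc (0:ℝ) T, ‖u' t‖ ≤ C := by
    intro t ht
    have hp := hpos t ht
    have hl := hlogneg t ht
    have hb := hbound t ht
    rw [Real.norm_eq_abs, hu']
    rw [abs_div, abs_neg, abs_neg, abs_div]
    rw [abs_of_pos hp, abs_of_neg hl]
    rw [div_div]
    rw [div_le_iff₀ (by nlinarith : (0:ℝ) < h t * -Real.log (h t))]
    calc |h' t| ≤ -C * h t * Real.log (h t) := hb
      _ = C * (h t * -Real.log (h t)) := by ring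
  have key : ∀ t ∈ Set.Icc (0:ℝ) T, |u t - u 0| ≤ C * t := by
    intro t ht
    have h0 : (0:ℝ) ∈ Set.Icc (0:ℝ) T := ⟨le_refl 0, hT.le⟩
    have := (convex_Icc (0:ℝ) T).norm_image_sub_le_of_norm_hasDerivWithin_le
      huderiv hubound h0 ht
    simpa [Real.norm_eq_abs, abs_of_nonneg ht.1] using this
  intro t ht
  have h0mem : (0:ℝ) ∈ Set.Icc (0:ℝ) T := ⟨le_refl 0, hT.le⟩
  have hp0 := hpos 0 h0mem
  have hpt := hpos t ht
  have hl0 := hlogneg 0 h0mem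
  have hlt := hlogneg t ht
  have hkey := key t ht
  have hL0 : (0:ℝ) < -Real.log (h 0) := by linarith
  have hLt : (0:ℝ) < -Real.log (h t) := by linarith
  have h1 : u t - u 0 ≤ C * t := (abs_le.1 hkey).2
  have h2 : -(C * t) ≤ u t - u 0 := (abs_le.1 hkey).1
  -- Lt ≤ exp(Ct) * L0
  have hup : -Real.log (h t) ≤ Real.exp (C * t) * (-Real.log (h 0)) := by
    have : u t ≤ C * t + u 0 := by linarith
    have := Real.exp_le_exp.2 this
    rwa [hu, Real.exp_log hLt, Real.exp_add, Real.exp_log hL0] at this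
  have hlo : Real.exp (-(C * t)) * (-Real.log (h 0)) ≤ -Real.log (h t) := by
    have : -(C * t) + u 0 ≤ u t := by linarith
    have := Real.exp_le_exp.2 this
    rwa [hu, Real.exp_log hLt, Real.exp_add, Real.exp_log hL0] at this
  constructor
  · rw [Real.rpow_def_of_pos hp0, ← Real.exp_log hpt]
    apply Real.exp_le_exp.2
    nlinarith
  · rw [Real.rpow_def_of_pos hp0, ← Real.exp_log hpt]
    apply Real.exp_le_exp.2
    rw [neg_mul] at *
    nlinarith
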